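/- Let δ ∈ {0,1}^J and x ∈ ℝ^{J^<} satisfy the inequalities (x1–x4): x_{i,j} ≥ δ_i − δ_j, x_{i,j} ≥ δ_j − δ_i, x_{i,j} ≤ δ_i + δ_j, x_{i,j} ≤ 2 − (δ_i + δ_j) for all (i,j) ∈ J^<. (i) If e ∈ ℝ^J satisfies e_j ≥ 0 for all j ∈ J and e_j ≤ δ_j (p(J) − p_j) for all j ∈ E(δ), then: [for every S ⊆ J, ∑_{i∈S} p_i e_i ≥ ∑_{(i,j)∈S^<} p_i p_j (δ_i + δ_j − x_{i,j})/2] if and only if [for every S ⊆ E(δ), ∑_{i∈S} p_i (e_i + p_i) ≥ g_p(S)]. (ii) If t ∈ ℝ^J satisfies t_j ≥ 0 for all j ∈ J and t_j ≤ (1−δ_j) p(J) for all j ∈ T(δ), then: [for every S ⊆ J, ∑_{i∈S} p_i t_i ≥ ∑_{(i,j)∈S^<} p_i p_j (2 − (δ_i + δ_j) − x_{i,j})/2 + ∑_{i∈S} p_i² (1 − δ_i)] if and only if [for every S ⊆ T(δ), ∑_{i∈S} p_i t_i ≥ g_p(S)]. -/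
import Mathlib


/-- `g_p(S) = ½(∑_{j∈S} p_j)² + ½ ∑_{j∈S} p_j²`. -/
noncomputable def gp {J : Type*} (p : J → ℝ) (S : Finset J) : ℝ :=
  (∑ j ∈ S, p j) ^ 2 / 2 + (∑ j ∈ S, (p j) ^ 2) / 2

/-- Sum over the ordered pairs `S^< = {(i,j) ∈ S² : i < j}`. -/
def pairSum {J : Type*} [LinearOrder J] (S : Finset J) (f : J → J → ℝ) : ℝ :=
  ∑ i ∈ S, ∑ j ∈ S.filter (fun j => i < j), f i j

lemma pairSum_congr {J : Type*} [LinearOrder J] (S : Finset J) (f g : J → J → ℝ)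
    (h : ∀ i ∈ S, ∀ j ∈ S, i < j → f i j = g i j) : pairSum S f = pairSum S g := by
  unfold pairSum
  refine Finset.sum_congr rfl fun i hi => Finset.sum_congr rfl fun j hj => ?_
  simp only [Finset.mem_filter] at hj
  exact h i hi j hj.1 hj.2

lemma pairSum_sq {J : Type*} [LinearOrder J] (S : Finset J) (q : J → ℝ) :
    pairSum S (fun i j => q i * q j)
      = ((∑ i ∈ S, q i) ^ 2 - ∑ i ∈ S, (q i) ^ 2) / 2 := by
  classical
  induction S using Finset.induction with
  | empty => simp [pairSum]
  | @insert a S ha ih =>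
    have hstep : pairSum (insert a S) (fun i j => q i * q j)
        = pairSum S (fun i j => q i * q j) + q a * ∑ j ∈ S, q j := by
      unfold pairSum
      rw [Finset.sum_insert ha]
      have h1 : ∑ j ∈ (insert a S).filter (fun j => a < j), q a * q j
          = ∑ j ∈ S.filter (fun j => a < j), q a * q j := by
        congr 1
        rw [Finset.filter_insert]
        simp [lt_irrefl]
      have h2 : ∀ i ∈ S, ∑ j ∈ (insert a S).filter (fun j => i < j), q i * q j
          = (if i < a then q i * q a else 0)
            + ∑ j ∈ S.filter (fun j => i < j), q i * q j := by
        intro i _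
        rw [Finset.filter_insert]
        by_cases h : i < a
        · rw [if_pos h, if_pos h, Finset.sum_insert (by simp [ha])]
        · rw [if_neg h, if_neg h, zero_add]
      rw [h1, Finset.sum_congr rfl h2, Finset.sum_add_distrib, Finset.sum_filter]
      have h3 : ∀ j ∈ S, (if a < j then q a * q j else 0)
          + (if j < a then q j * q a else 0) = q a * q j := by
        intro j hj
        have hne : j ≠ a := fun h => ha (h ▸ hj)
        rcases lt_trichotomy a j with h | h | h
        · rw [if_pos h, if_neg (lt_asymm h), add_zero]
        · exact absurd h.symm hne
        · rw [if_neg (lt_asymm h), if_pos h, zero_add]; ring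
      have h4 : ((∑ j ∈ S, if a < j then q a * q j else 0)
          + ∑ j ∈ S, if j < a then q j * q a else 0) = q a * ∑ j ∈ S, q j := by
        rw [Finset.mul_sum, ← Finset.sum_add_distrib]
        exact Finset.sum_congr rfl h3
      simp only [pairSum]
      linarith [h4]
    rw [hstep, ih, Finset.sum_insert ha, Finset.sum_insert ha]
    ring

/-- relation between the linearized non-overlapping inequalities (S1)
(resp. (S2)) and the Queyranne inequalities (Q) on the early set `E(δ)` (resp. the
tardy set `T(δ)`). -/
theorem stmt_11 {J : Type*} [Fintype J] [LinearOrder J]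
    (p : J → ℝ) (hp : ∀ j, 0 < p j)
    (δ : J → ℝ) (hδ : ∀ j, δ j = 0 ∨ δ j = 1)
    (x : J → J → ℝ)
    (hx : ∀ i j : J, i < j →
      x i j ≥ δ i - δ j ∧ x i j ≥ δ j - δ i ∧
      x i j ≤ δ i + δ j ∧ x i j ≤ 2 - (δ i + δ j))
    (e t : J → ℝ) :
    ((∀ j, 0 ≤ e j) → (∀ j, δ j = 1 → e j ≤ δ j * ((∑ k, p k) - p j)) →
      ((∀ S : Finset J,
          ∑ i ∈ S, p i * e i ≥ pairSum S (fun i j => p i * p j * (δ i + δ j - x i j) / 2))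
        ↔ (∀ S : Finset J, (∀ j ∈ S, δ j = 1) →
            ∑ i ∈ S, p i * (e i + p i) ≥ gp p S))) ∧
    ((∀ j, 0 ≤ t j) → (∀ j, δ j = 0 → t j ≤ (1 - δ j) * (∑ k, p k)) →
      ((∀ S : Finset J,
          ∑ i ∈ S, p i * t i ≥
            pairSum S (fun i j => p i * p j * (2 - (δ i + δ j) - x i j) / 2)
              + ∑ i ∈ S, (p i) ^ 2 * (1 - δ i))
        ↔ (∀ S : Finset J, (∀ j ∈ S, δ j = 0) →
            ∑ i ∈ S, p i * t i ≥ gp p S))) := by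
  classical
  constructor
  · -- Part (i)
    intro he0 _hbd
    have key : ∀ S : Finset J,
        pairSum S (fun i j => p i * p j * (δ i + δ j - x i j) / 2)
          = gp p (S.filter (fun j => δ j = 1))
            - ∑ i ∈ S.filter (fun j => δ j = 1), (p i) ^ 2 := by
      intro S
      have h1 : pairSum S (fun i j => p i * p j * (δ i + δ j - x i j) / 2)
          = pairSum S (fun i j => (p i * δ i) * (p j * δ j)) := by
        apply pairSum_congr
        intro i _ j _ hij
        obtain ⟨a1, a2, a3, a4⟩ := hx i j hij
        rcases hδ i with hi | hi <;> rcases hδ j with hj | hj <;>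
          rw [hi, hj] at a1 a2 a3 a4 ⊢
        · have h0 : x i j = 0 := le_antisymm (by linarith) (by linarith)
          rw [h0]; ring
        · have h0 : x i j = 1 := le_antisymm (by linarith) (by linarith)
          rw [h0]; ring
        · have h0 : x i j = 1 := le_antisymm (by linarith) (by linarith)
          rw [h0]; ring
        · have h0 : x i j = 0 := le_antisymm (by linarith) (by linarith)
          rw [h0]; ring
      have h2 : ∑ i ∈ S, p i * δ i = ∑ i ∈ S.filter (fun j => δ j = 1), p i := by
        rw [Finset.sum_filter]
        refine Finset.sum_congr rfl fun i _ => ?_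
        rcases hδ i with h | h <;> simp [h]
      have h3 : ∑ i ∈ S, (p i * δ i) ^ 2
          = ∑ i ∈ S.filter (fun j => δ j = 1), (p i) ^ 2 := by
        rw [Finset.sum_filter]
        refine Finset.sum_congr rfl fun i _ => ?_
        rcases hδ i with h | h <;> simp [h]
      rw [h1, pairSum_sq, h2, h3, gp]; ring
    constructor
    · intro hS1 S hSE
      have hfilt : S.filter (fun j => δ j = 1) = S := Finset.filter_true_of_mem hSE
      have h := hS1 S
      rw [key S, hfilt] at h
      have hsum : ∑ i ∈ S, p i * (e i + p i)
          = ∑ i ∈ S, p i * e i + ∑ i ∈ S, (p i) ^ 2 := by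
        rw [← Finset.sum_add_distrib]
        exact Finset.sum_congr rfl fun i _ => by ring
      rw [hsum]; linarith
    · intro hQ S
      rw [key S]
      set S' := S.filter (fun j => δ j = 1) with hS'
      have hq := hQ S' (fun j hj => (Finset.mem_filter.mp hj).2)
      have hsum : ∑ i ∈ S', p i * (e i + p i)
          = ∑ i ∈ S', p i * e i + ∑ i ∈ S', (p i) ^ 2 := by
        rw [← Finset.sum_add_distrib]
        exact Finset.sum_congr rfl fun i _ => by ring
      have hmono : ∑ i ∈ S', p i * e i ≤ ∑ i ∈ S, p i * e i :=
        Finset.sum_le_sum_of_subset_of_nonneg (Finset.filter_subset _ _)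
          (fun i _ _ => mul_nonneg (hp i).le (he0 i))
      rw [hsum] at hq
      linarith
  · -- Part (ii)
    intro ht0 _hbd
    have key : ∀ S : Finset J,
        pairSum S (fun i j => p i * p j * (2 - (δ i + δ j) - x i j) / 2)
          + ∑ i ∈ S, (p i) ^ 2 * (1 - δ i)
          = gp p (S.filter (fun j => δ j = 0)) := by
      intro S
      have h1 : pairSum S (fun i j => p i * p j * (2 - (δ i + δ j) - x i j) / 2)
          = pairSum S (fun i j => (p i * (1 - δ i)) * (p j * (1 - δ j))) := by
        apply pairSum_congr
        intro i _ j _ hij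
        obtain ⟨a1, a2, a3, a4⟩ := hx i j hij
        rcases hδ i with hi | hi <;> rcases hδ j with hj | hj <;>
          rw [hi, hj] at a1 a2 a3 a4 ⊢
        · have h0 : x i j = 0 := le_antisymm (by linarith) (by linarith)
          rw [h0]; ring
        · have h0 : x i j = 1 := le_antisymm (by linarith) (by linarith)
          rw [h0]; ring
        · have h0 : x i j = 1 := le_antisymm (by linarith) (by linarith)
          rw [h0]; ring
        · have h0 : x i j = 0 := le_antisymm (by linarith) (by linarith)
          rw [h0]; ring
      have h2 : ∑ i ∈ S, p i * (1 - δ i)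
          = ∑ i ∈ S.filter (fun j => δ j = 0), p i := by
        rw [Finset.sum_filter]
        refine Finset.sum_congr rfl fun i _ => ?_
        rcases hδ i with h | h <;> simp [h]
      have h3 : ∑ i ∈ S, (p i * (1 - δ i)) ^ 2
          = ∑ i ∈ S.filter (fun j => δ j = 0), (p i) ^ 2 := by
        rw [Finset.sum_filter]
        refine Finset.sum_congr rfl fun i _ => ?_
        rcases hδ i with h | h <;> simp [h]
      have h4 : ∑ i ∈ S, (p i) ^ 2 * (1 - δ i)
          = ∑ i ∈ S.filter (fun j => δ j = 0), (p i) ^ 2 := by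
        rw [Finset.sum_filter]
        refine Finset.sum_congr rfl fun i _ => ?_
        rcases hδ i with h | h <;> simp [h]
      rw [h1, pairSum_sq, h2, h3, h4, gp]; ring
    constructor
    · intro hS2 S hST
      have hfilt : S.filter (fun j => δ j = 0) = S := Finset.filter_true_of_mem hST
      have h := hS2 S
      rw [show pairSum S (fun i j => p i * p j * (2 - (δ i + δ j) - x i j) / 2)
            + ∑ i ∈ S, (p i) ^ 2 * (1 - δ i) = gp p S by rw [key S, hfilt]] at h
      exact h
    · intro hQ S
      have hk := key S
      set S' := S.filter (fun j => δ j = 0) with hS'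
      have hq := hQ S' (fun j hj => (Finset.mem_filter.mp hj).2)
      have hmono : ∑ i ∈ S', p i * t i ≤ ∑ i ∈ S, p i * t i :=
        Finset.sum_le_sum_of_subset_of_nonneg (Finset.filter_subset _ _)
          (fun i _ _ => mul_nonneg (hp i).le (ht0 i))
      linarith
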